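/- Let ‖·‖_K and ‖·‖_L be two norms on ℝⁿ with ‖x‖_K ≤ ‖x‖_L ≤ λ‖x‖_K for all x and some λ ≥ 1. Then the map π(x) = (‖x‖_K/‖x‖_L)·x, defined for x ≠ 0, is (2λ+1)-Lipschitz with respect to the metric induced by ‖·‖_K on its domain. -/

import Mathlib

open MeasureTheory Metric Set

/-- The `ε`-expansion of a set with respect to a distance function `d`. -/
def expandBy {X : Type*} (d : X → X → ℝ) (A : Set X) (ε : ℝ) : Set X :=
  {x | ∃ a ∈ A, d x a ≤ ε}

/-- The concentration function of a metric probability space, where the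
metric is given by the distance function `d`. -/
noncomputable def concFn {X : Type*} [MeasurableSpace X] (d : X → X → ℝ)
    (μ : Measure X) (ε : ℝ) : ℝ :=
  sSup {r | ∃ A : Set X, MeasurableSet A ∧ (1 : ℝ)/2 ≤ (μ A).toReal ∧
    r = 1 - (μ (expandBy d A ε)).toReal}

/-- `m` is a median of `f` with respect to `μ`. -/
def IsMedian {X : Type*} [MeasurableSpace X] (μ : Measure X) (f : X → ℝ) (m : ℝ) : Prop :=
  (1 : ℝ)/2 ≤ (μ {x | f x ≤ m}).toReal ∧ (1 : ℝ)/2 ≤ (μ {x | m ≤ f x}).toReal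

private lemma key_lip {n : ℕ} (nK nL : Seminorm ℝ (Fin n → ℝ))
    (hKdef : ∀ x, nK x = 0 → x = 0)
    (lam : ℝ) (hlam : 1 ≤ lam)
    (h1 : ∀ x, nK x ≤ nL x) (h2 : ∀ x, nL x ≤ lam * nK x)
    (x y : Fin n → ℝ) (hx : x ≠ 0) (hy : y ≠ 0) (hba : nK y ≤ nK x) :
    nK ((nK x / nL x) • x - (nK y / nL y) • y) ≤ (2 * lam + 1) * nK (x - y) := by
  have ha : 0 < nK x := lt_of_le_of_ne (apply_nonneg nK x)
    (fun h => hx (hKdef x h.symm))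
  have hb : 0 < nK y := lt_of_le_of_ne (apply_nonneg nK y)
    (fun h => hy (hKdef y h.symm))
  have hA : 0 < nL x := ha.trans_le (h1 x)
  have hB : 0 < nL y := hb.trans_le (h1 y)
  set a := nK x; set b := nK y; set A := nL x; set B := nL y
  set d := nK (x - y) with hd
  have hdnn : 0 ≤ d := apply_nonneg nK _
  have heq : (a / A) • x - (b / B) • y = (a / A) • (x - y) + (a / A - b / B) • y := by
    module
  have hstep : nK ((a / A) • x - (b / B) • y) ≤ (a / A) * d + |a / A - b / B| * b := by
    rw [heq]
    refine (map_add_le_add nK _ _).trans ?_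
    rw [map_smul_eq_mul, map_smul_eq_mul, Real.norm_eq_abs, Real.norm_eq_abs,
      abs_of_pos (div_pos ha hA)]
  have hK1 : |a - b| ≤ d := abs_sub_map_le_sub nK x y
  have hLd : nL (x - y) ≤ lam * d := h2 _
  have hL1 : |A - B| ≤ lam * d := (abs_sub_map_le_sub nL x y).trans hLd
  have hfrac : |a / A - b / B| = |a * B - b * A| / (A * B) := by
    rw [div_sub_div _ _ hA.ne' hB.ne', abs_div, abs_of_pos (mul_pos hA hB)]
    ring_nf
  have hnum : |a * B - b * A| ≤ d * B + b * (lam * d) := by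
    have : a * B - b * A = (a - b) * B + b * (B - A) := by ring
    rw [this]
    refine (abs_add_le _ _).trans ?_
    rw [abs_mul, abs_mul, abs_of_pos hB, abs_of_pos hb, abs_sub_comm B A]
    exact add_le_add (mul_le_mul_of_nonneg_right hK1 hB.le)
      (mul_le_mul_of_nonneg_left hL1 hb.le)
  have hterm2 : |a / A - b / B| * b ≤ (1 + lam) * d := by
    rw [hfrac, div_mul_eq_mul_div, div_le_iff₀ (mul_pos hA hB)]
    have hbB : b ≤ B := h1 y
    have hbA : b ≤ A := hba.trans (h1 x)
    have h0lam : (0:ℝ) ≤ lam := le_trans zero_le_one hlam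
    nlinarith [mul_le_mul_of_nonneg_right hnum hb.le,
      mul_nonneg (mul_nonneg hdnn hB.le) (sub_nonneg.2 hbA),
      mul_nonneg (mul_nonneg (mul_nonneg h0lam hdnn) hb.le) (sub_nonneg.2 hbB),
      mul_nonneg (mul_nonneg (mul_nonneg h0lam hdnn) hB.le) (sub_nonneg.2 hbA)]
  have haA : a / A ≤ 1 := (div_le_one hA).mpr (h1 x)
  calc nK ((a / A) • x - (b / B) • y) ≤ (a / A) * d + |a / A - b / B| * b := hstep
    _ ≤ 1 * d + (1 + lam) * d := add_le_add (mul_le_mul_of_nonneg_right haA hdnn) hterm2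
    _ ≤ (2 * lam + 1) * d := by nlinarith

theorem stmt3 {n : ℕ} (nK nL : Seminorm ℝ (Fin n → ℝ))
    (hKdef : ∀ x, nK x = 0 → x = 0)
    (lam : ℝ) (hlam : 1 ≤ lam)
    (h1 : ∀ x, nK x ≤ nL x) (h2 : ∀ x, nL x ≤ lam * nK x)
    (x y : Fin n → ℝ) (hx : x ≠ 0) (hy : y ≠ 0) :
    nK ((nK x / nL x) • x - (nK y / nL y) • y) ≤ (2 * lam + 1) * nK (x - y) := by
  rcases le_total (nK y) (nK x) with h | h
  · exact key_lip nK nL hKdef lam hlam h1 h2 x y hx hy h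
  · have := key_lip nK nL hKdef lam hlam h1 h2 y x hy hx h
    calc nK ((nK x / nL x) • x - (nK y / nL y) • y)
        = nK ((nK y / nL y) • y - (nK x / nL x) • x) := by
          rw [← neg_sub, map_neg_eq_map]
      _ ≤ (2 * lam + 1) * nK (y - x) := this
      _ = (2 * lam + 1) * nK (x - y) := by rw [← neg_sub x y, map_neg_eq_map]
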